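/- X_α is exactly the space of strong τ_{F_α}-continuity inside F_α: for x ∈ F_α one has x ∈ X_α if and only if lim_{t→0+} p_{F_α}(T(t)x − x) = 0 for every p ∈ 𝒫; that is, X_α = {x ∈ F_α : the orbit t ↦ T(t)x is τ_{F_α}-continuous at t = 0}. -/

import Mathlib

open scoped Topology

/-- The Favard norm `‖z‖_{F_α} = sup_{t>0} t^{−α}‖T(t)z − z‖` (as a supremum in `ℝ`). -/
noncomputable def favNorm {X : Type*} [NormedAddCommGroup X] [NormedSpace ℝ X]
    (T : ℝ → X →L[ℝ] X) (α : ℝ) (z : X) : ℝ :=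
  sSup ((fun t : ℝ => ‖T t z - z‖ / t ^ α) '' Set.Ioi 0)

/-- Membership in the Favard space `F_α`. -/
def memFav {X : Type*} [NormedAddCommGroup X] [NormedSpace ℝ X]
    (T : ℝ → X →L[ℝ] X) (α : ℝ) (z : X) : Prop :=
  BddAbove ((fun t : ℝ => ‖T t z - z‖ / t ^ α) '' Set.Ioi 0)

/-- The seminorm `p_{F_α}(z) = sup_{t>0} t^{−α} p(T(t)z − z)`. -/
noncomputable def pFav {X : Type*} [NormedAddCommGroup X] [NormedSpace ℝ X]
    (T : ℝ → X →L[ℝ] X) (α : ℝ) (p : Seminorm ℝ X) (z : X) : ℝ :=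
  sSup ((fun t : ℝ => p (T t z - z) / t ^ α) '' Set.Ioi 0)

/-- Membership in the space `X_α ⊆ F_α`. -/
def memX {X : Type*} [NormedAddCommGroup X] [NormedSpace ℝ X]
    (P : Set (Seminorm ℝ X)) (T : ℝ → X →L[ℝ] X) (α : ℝ) (z : X) : Prop :=
  memFav T α z ∧
    ∀ p ∈ P, Filter.Tendsto (fun t : ℝ => p (T t z - z) / t ^ α)
      (nhdsWithin 0 (Set.Ioi 0)) (nhds 0)

/-- `X_α` is exactly the space of strong `τ_{F_α}`-continuity inside `F_α`:
for `x ∈ F_α`, `x ∈ X_α` iff `p_{F_α}(T(t)x − x) → 0` as `t → 0+` for every `p ∈ 𝒫`. -/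
theorem statement14
    {X : Type*} [NormedAddCommGroup X] [NormedSpace ℝ X] [CompleteSpace X]
    (P : Set (Seminorm ℝ X))
    (hnorm : ∀ x : X, ‖x‖ = sSup {r : ℝ | ∃ p ∈ P, r = p x})
    (hcomplete : ∀ (u : ℕ → X) (C : ℝ), (∀ n, ‖u n‖ ≤ C) →
      (∀ p ∈ P, ∀ ε > (0:ℝ), ∃ N : ℕ, ∀ m ≥ N, ∀ n ≥ N, p (u m - u n) < ε) →
      ∃ x : X, ∀ p ∈ P, Filter.Tendsto (fun n => p (u n - x)) Filter.atTop (𝓝 0))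
    (T : ℝ → X →L[ℝ] X) (hT0 : T 0 = 1)
    (hTsg : ∀ s t : ℝ, 0 ≤ s → 0 ≤ t → T (t + s) = (T t).comp (T s))
    (M ω : ℝ) (hM : 1 ≤ M) (hω : ω < 0)
    (hgrowth : ∀ t : ℝ, 0 ≤ t → ‖T t‖ ≤ M * Real.exp (ω * t))
    (horbit : ∀ x : X, ∀ p ∈ P, ∀ t₀ : ℝ, 0 ≤ t₀ →
      Filter.Tendsto (fun t : ℝ => p (T t x - T t₀ x)) (𝓝[Set.Ici 0] t₀) (𝓝 0))
    (hbieq : ∀ (u : ℕ → X) (C : ℝ), (∀ n, ‖u n‖ ≤ C) →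
      (∀ p ∈ P, Filter.Tendsto (fun n => p (u n)) Filter.atTop (𝓝 0)) →
      ∀ t₀ > (0:ℝ), ∀ p ∈ P, ∀ ε > (0:ℝ), ∃ N : ℕ, ∀ n ≥ N, ∀ s ∈ Set.Icc (0:ℝ) t₀,
        p (T s (u n)) < ε)
    (α : ℝ) (hα : α ∈ Set.Ioo (0:ℝ) 1)
    (x : X) (hx : memFav T α x) :
    memX P T α x ↔
      ∀ p ∈ P, Filter.Tendsto (fun t : ℝ => pFav T α p (T t x - x))
        (𝓝[>] (0:ℝ)) (𝓝 0) := by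
  obtain ⟨hα0, hα1⟩ := hα
  -- basic facts
  have hpow_pos : ∀ t : ℝ, 0 < t → 0 < t ^ α := fun t ht => Real.rpow_pos_of_pos ht α
  -- every seminorm in P is dominated by the norm
  have hple : ∀ p ∈ P, ∀ y : X, p y ≤ ‖y‖ := by
    intro p hp y
    rcases eq_or_ne y 0 with rfl | hy
    · simp [map_zero]
    · have hS : BddAbove {r : ℝ | ∃ q ∈ P, r = q y} := by
        by_contra hB
        have := Real.sSup_of_not_bddAbove hB
        rw [← hnorm y] at this
        exact hy (norm_eq_zero.mp this)
      calc p y ≤ sSup {r : ℝ | ∃ q ∈ P, r = q y} := le_csSup hS ⟨p, hp, rfl⟩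
        _ = ‖y‖ := (hnorm y).symm
  -- the Favard constant for x
  set C : ℝ := favNorm T α x with hC
  have hCb : ∀ t : ℝ, 0 < t → ‖T t x - x‖ / t ^ α ≤ C :=
    fun t ht => le_csSup hx ⟨t, ht, rfl⟩
  have hCnorm : ∀ t : ℝ, 0 < t → ‖T t x - x‖ ≤ C * t ^ α := by
    intro t ht
    have := hCb t ht
    rw [div_le_iff₀ (hpow_pos t ht)] at this
    exact this
  have hC0 : 0 ≤ C := le_trans (by positivity) (hCb 1 one_pos)
  -- operator norm bound
  have hTle : ∀ t : ℝ, 0 ≤ t → ∀ y : X, ‖T t y‖ ≤ M * ‖y‖ := by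
    intro t ht y
    calc ‖T t y‖ ≤ ‖T t‖ * ‖y‖ := (T t).le_opNorm y
      _ ≤ (M * Real.exp (ω * t)) * ‖y‖ := by
          apply mul_le_mul_of_nonneg_right (hgrowth t ht) (norm_nonneg y)
      _ ≤ M * ‖y‖ := by
          apply mul_le_mul_of_nonneg_right _ (norm_nonneg y)
          nlinarith [Real.exp_le_one_iff.mpr (mul_nonpos_of_nonpos_of_nonneg hω.le ht),
            Real.exp_pos (ω * t)]
  -- commutation identity
  have hcomm : ∀ t u : ℝ, 0 ≤ t → 0 ≤ u →
      T u (T t x - x) - (T t x - x) = T t (T u x - x) - (T u x - x) := by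
    intro t u ht hu
    have h1 : T (u + t) = (T u).comp (T t) := hTsg t u ht hu
    have h2 : T (t + u) = (T t).comp (T u) := hTsg u t hu ht
    have h3 : T u (T t x) = T t (T u x) := by
      have : T (u + t) x = T (t + u) x := by rw [add_comm]
      rwa [h1, h2] at this
    simp only [map_sub]
    rw [h3]; abel
  -- bound for the pFav set of z_t : each element ≤ (M+1)*C
  have hset_bd : ∀ p ∈ P, ∀ t : ℝ, 0 ≤ t → ∀ u : ℝ, 0 < u →
      p (T u (T t x - x) - (T t x - x)) / u ^ α ≤ (M + 1) * C := by
    intro p hp t ht u hu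
    rw [hcomm t u ht hu.le]
    have h1 : p (T t (T u x - x) - (T u x - x)) ≤ (M + 1) * (C * u ^ α) := by
      calc p (T t (T u x - x) - (T u x - x)) ≤ ‖T t (T u x - x) - (T u x - x)‖ :=
            hple p hp _
        _ ≤ ‖T t (T u x - x)‖ + ‖T u x - x‖ := norm_sub_le _ _
        _ ≤ M * ‖T u x - x‖ + ‖T u x - x‖ := by
            linarith [hTle t ht (T u x - x)]
        _ = (M + 1) * ‖T u x - x‖ := by ring
        _ ≤ (M + 1) * (C * u ^ α) := by
            apply mul_le_mul_of_nonneg_left (hCnorm u hu) (by linarith)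
    rw [div_le_iff₀ (hpow_pos u hu)]
    calc p (T t (T u x - x) - (T u x - x)) ≤ (M + 1) * (C * u ^ α) := h1
      _ = (M + 1) * C * u ^ α := by ring
  have hset_bdd : ∀ p ∈ P, ∀ t : ℝ, 0 ≤ t →
      BddAbove ((fun u : ℝ => p (T u (T t x - x) - (T t x - x)) / u ^ α) '' Set.Ioi 0) := by
    intro p hp t ht
    refine ⟨(M + 1) * C, ?_⟩
    rintro r ⟨u, hu, rfl⟩
    exact hset_bd p hp t ht u hu
  have hQ_nonneg : ∀ p ∈ P, ∀ t : ℝ, pFav T α p (T t x - x) ≥ 0 := by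
    intro p hp t
    apply Real.sSup_nonneg
    rintro r ⟨u, hu, rfl⟩
    have := hpow_pos u hu
    positivity
  have hQ_mem_le : ∀ p ∈ P, ∀ t : ℝ, 0 ≤ t → ∀ u : ℝ, 0 < u →
      p (T u (T t x - x) - (T t x - x)) / u ^ α ≤ pFav T α p (T t x - x) := by
    intro p hp t ht u hu
    exact le_csSup (hset_bdd p hp t ht) ⟨u, hu, rfl⟩
  constructor
  · -- forward direction
    rintro ⟨-, hXa⟩ p hp
    rw [NormedAddCommGroup.tendsto_nhds_zero]
    intro ε hε
    -- step 1: uniform smallness of p(T s ((u^α)⁻¹ • (T u x - x))) for small u, s ∈ [0,1]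
    have key : ∃ δ > (0:ℝ), ∀ u : ℝ, 0 < u → u ≤ δ → ∀ s ∈ Set.Icc (0:ℝ) 1,
        p (T s ((u ^ α)⁻¹ • (T u x - x))) < ε / 4 := by
      by_contra hcon
      push_neg at hcon
      choose u hu1 hu2 s hs hbad using fun n : ℕ => hcon (1 / (n + 1)) (by positivity)
      set v : ℕ → X := fun n => ((u n) ^ α)⁻¹ • (T (u n) x - x) with hv
      have hu0 : Filter.Tendsto u Filter.atTop (𝓝[>] (0:ℝ)) := by
        apply tendsto_nhdsWithin_of_tendsto_nhds_of_eventually_within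
        · exact squeeze_zero (fun n => (hu1 n).le) hu2 tendsto_one_div_add_atTop_nhds_zero_nat
        · exact Filter.Eventually.of_forall fun n => hu1 n
      have hvC : ∀ n, ‖v n‖ ≤ C := by
        intro n
        have hp := hpow_pos (u n) (hu1 n)
        rw [hv]
        simp only [norm_smul, norm_inv, Real.norm_eq_abs, abs_of_pos hp]
        rw [inv_mul_eq_div]
        exact hCb (u n) (hu1 n)
      have hvp : ∀ q ∈ P, Filter.Tendsto (fun n => q (v n)) Filter.atTop (𝓝 0) := by
        intro q hq
        have h1 : Filter.Tendsto (fun n => q (T (u n) x - x) / (u n) ^ α)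
            Filter.atTop (𝓝 0) := (hXa q hq).comp hu0
        convert h1 using 2 with n
        rw [hv]
        simp only [map_smul_eq_mul, norm_inv, Real.norm_eq_abs,
          abs_of_pos (hpow_pos (u n) (hu1 n))]
        rw [div_eq_inv_mul]
      obtain ⟨N, hN⟩ := hbieq v C hvC hvp 1 one_pos p hp (ε / 4) (by linarith)
      exact absurd (hN N le_rfl (s N) (hs N)) (not_lt.mpr (hbad N))
    obtain ⟨δ, hδ, hδkey⟩ := key
    -- step 2: large-u tail eventually small
    have hpowδ := hpow_pos δ hδ
    have htail : Filter.Tendsto (fun t : ℝ => (M + 1) * C * t ^ α / δ ^ α)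
        (𝓝[>] (0:ℝ)) (𝓝 0) := by
      have h1 : Filter.Tendsto (fun t : ℝ => t ^ α) (𝓝[>] (0:ℝ)) (𝓝 0) := by
        have hc : ContinuousAt (fun t : ℝ => t ^ α) 0 :=
          Real.continuousAt_rpow_const 0 α (Or.inr hα0.le)
        have := hc.tendsto.mono_left (nhdsWithin_le_nhds : 𝓝[Set.Ioi (0:ℝ)] 0 ≤ 𝓝 0)
        rwa [Real.zero_rpow (ne_of_gt hα0)] at this
      have := (h1.const_mul ((M + 1) * C)).div_const (δ ^ α)
      simpa using this
    rw [NormedAddCommGroup.tendsto_nhds_zero] at htail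
    have hev1 := htail (ε / 2) (by linarith)
    have hev2 : ∀ᶠ t : ℝ in 𝓝[>] 0, t < 1 := by
      filter_upwards [Ioo_mem_nhdsGT_of_mem (Set.left_mem_Ico.mpr one_pos)] with t ht
      exact ht.2
    filter_upwards [hev1, hev2, self_mem_nhdsWithin] with t hev1' hev2' ht0
    have ht0' : (0:ℝ) < t := ht0
    have hQle : pFav T α p (T t x - x) ≤ ε / 2 := by
      simp only [pFav]
      apply csSup_le (Set.nonempty_Ioi.image _)
      rintro r ⟨u, hu, rfl⟩
      have hu' : (0:ℝ) < u := hu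
      have hpu := hpow_pos u hu'
      show p (T u (T t x - x) - (T t x - x)) / u ^ α ≤ ε / 2
      rcases le_or_gt u δ with hud | hud
      · -- small u
        rw [hcomm t u ht0'.le hu'.le]
        have h0 : p (T 0 ((u ^ α)⁻¹ • (T u x - x))) = (u ^ α)⁻¹ * p (T u x - x) := by
          rw [hT0]
          simp [map_smul_eq_mul, abs_of_pos hpu]
        have h1 : p (T t ((u ^ α)⁻¹ • (T u x - x))) = (u ^ α)⁻¹ * p (T t (T u x - x)) := by
          rw [map_smul, map_smul_eq_mul]
          simp [abs_of_pos hpu]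
        have h2 : (0:ℝ) ≤ (u ^ α)⁻¹ := by positivity
        have e1 : p (T t (T u x - x) - (T u x - x)) / u ^ α
            ≤ p (T t ((u ^ α)⁻¹ • (T u x - x))) + p (T 0 ((u ^ α)⁻¹ • (T u x - x))) := by
          rw [h0, h1, div_eq_inv_mul]
          have h3 := map_sub_le_add p (T t (T u x - x)) (T u x - x)
          calc (u ^ α)⁻¹ * p (T t (T u x - x) - (T u x - x))
              ≤ (u ^ α)⁻¹ * (p (T t (T u x - x)) + p (T u x - x)) :=
                mul_le_mul_of_nonneg_left h3 h2
            _ = (u ^ α)⁻¹ * p (T t (T u x - x)) + (u ^ α)⁻¹ * p (T u x - x) := by ring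
        have s1 := hδkey u hu' hud t ⟨ht0'.le, hev2'.le⟩
        have s2 := hδkey u hu' hud 0 ⟨le_rfl, zero_le_one⟩
        linarith
      · -- large u
        have e1 : p (T u (T t x - x) - (T t x - x)) ≤ (M + 1) * C * t ^ α := by
          calc p (T u (T t x - x) - (T t x - x)) ≤ ‖T u (T t x - x) - (T t x - x)‖ :=
                hple p hp _
            _ ≤ ‖T u (T t x - x)‖ + ‖T t x - x‖ := norm_sub_le _ _
            _ ≤ M * ‖T t x - x‖ + ‖T t x - x‖ := by linarith [hTle u hu'.le (T t x - x)]
            _ = (M + 1) * ‖T t x - x‖ := by ring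
            _ ≤ (M + 1) * (C * t ^ α) :=
                mul_le_mul_of_nonneg_left (hCnorm t ht0') (by linarith)
            _ = (M + 1) * C * t ^ α := by ring
        have e2 : p (T u (T t x - x) - (T t x - x)) / u ^ α ≤ (M + 1) * C * t ^ α / δ ^ α := by
          apply div_le_div₀ (by positivity) e1 hpowδ (Real.rpow_le_rpow hδ.le hud.le hα0.le)
        have e3 : (M + 1) * C * t ^ α / δ ^ α < ε / 2 :=
          lt_of_abs_lt (by rw [← Real.norm_eq_abs]; exact hev1')
        linarith
    have hQn := hQ_nonneg p hp t
    rw [Real.norm_eq_abs, abs_of_nonneg hQn]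
    linarith
  · -- reverse direction
    intro hQ
    refine ⟨hx, ?_⟩
    intro p hp
    set θ : ℝ := (2:ℝ) ^ α / 2 with hθ
    have h2a : ((2:ℝ)) ^ α ≠ 0 := ne_of_gt (Real.rpow_pos_of_pos two_pos α)
    have hθ0 : 0 ≤ θ := by rw [hθ]; positivity
    have hθ1 : θ < 1 := by
      rw [hθ, div_lt_one (by norm_num : (0:ℝ) < 2)]
      calc (2:ℝ) ^ α < 2 ^ (1:ℝ) := Real.rpow_lt_rpow_of_exponent_lt one_lt_two hα1
        _ = 2 := Real.rpow_one 2
    set b : ℝ → ℝ := fun t => p (T t x - x) / t ^ α with hb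
    have hbC : ∀ t : ℝ, 0 < t → b t ≤ C := by
      intro t ht
      calc b t = p (T t x - x) / t ^ α := rfl
        _ ≤ ‖T t x - x‖ / t ^ α := (div_le_div_iff_of_pos_right (hpow_pos t ht)).mpr (hple p hp _)
        _ ≤ C := hCb t ht
    have hkey : ∀ t : ℝ, 0 < t → b t ≤ θ * b (2 * t) + pFav T α p (T t x - x) / 2 := by
      intro t ht
      have hpt := hpow_pos t ht
      have hta : t ^ α ≠ 0 := ne_of_gt hpt
      have h2t : T (2 * t) x = T t (T t x) := by
        rw [two_mul, hTsg t t ht.le ht.le]; rfl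
      have hid : (T (2 * t) x - x) - (T t (T t x - x) - (T t x - x))
          = (T t x - x) + (T t x - x) := by
        rw [h2t, map_sub]; abel
      have h2p : 2 * p (T t x - x)
          ≤ p (T (2 * t) x - x) + p (T t (T t x - x) - (T t x - x)) := by
        have h1 : p ((T t x - x) + (T t x - x))
            ≤ p (T (2 * t) x - x) + p (T t (T t x - x) - (T t x - x)) := by
          rw [← hid]; exact map_sub_le_add p _ _
        have h2 : p ((T t x - x) + (T t x - x)) = 2 * p (T t x - x) := by
          rw [← two_smul ℝ (T t x - x), map_smul_eq_mul]
          norm_num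
        linarith
      have hq : p (T t (T t x - x) - (T t x - x)) / t ^ α ≤ pFav T α p (T t x - x) :=
        hQ_mem_le p hp t ht.le t ht
      have hmul : (2 * t) ^ α = 2 ^ α * t ^ α := Real.mul_rpow (by norm_num) ht.le
      have e1 : θ * b (2 * t) = p (T (2 * t) x - x) / (2 * t ^ α) := by
        show θ * (p (T (2 * t) x - x) / (2 * t) ^ α) = _
        rw [hmul, hθ]
        field_simp
      show p (T t x - x) / t ^ α ≤ θ * b (2 * t) + pFav T α p (T t x - x) / 2
      rw [e1]
      calc p (T t x - x) / t ^ α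
          ≤ (p (T (2 * t) x - x) + p (T t (T t x - x) - (T t x - x))) / (2 * t ^ α) := by
            rw [div_le_div_iff₀ hpt (by positivity)]
            nlinarith [h2p, hpt.le, apply_nonneg p (T (2 * t) x - x),
              apply_nonneg p (T t (T t x - x) - (T t x - x))]
        _ = p (T (2 * t) x - x) / (2 * t ^ α)
            + (p (T t (T t x - x) - (T t x - x)) / t ^ α) / 2 := by
            field_simp
        _ ≤ p (T (2 * t) x - x) / (2 * t ^ α) + pFav T α p (T t x - x) / 2 := by
            linarith
    have hiter : ∀ n : ℕ, ∀ t : ℝ, 0 < t →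
        b t ≤ θ ^ n * b (2 ^ n * t)
          + (1 / 2) * ∑ k ∈ Finset.range n, θ ^ k * pFav T α p (T (2 ^ k * t) x - x) := by
      intro n
      induction n with
      | zero => intro t ht; simp
      | succ n ih =>
        intro t ht
        have h1 := ih t ht
        have hpos : (0:ℝ) < 2 ^ n * t := by positivity
        have h2 := hkey (2 ^ n * t) hpos
        have e : (2:ℝ) * (2 ^ n * t) = 2 ^ (n + 1) * t := by ring
        rw [e] at h2
        have hθn : (0:ℝ) ≤ θ ^ n := pow_nonneg hθ0 n
        have h3 : θ ^ n * b (2 ^ n * t)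
            ≤ θ ^ n * (θ * b (2 ^ (n + 1) * t) + pFav T α p (T (2 ^ n * t) x - x) / 2) :=
          mul_le_mul_of_nonneg_left h2 hθn
        calc b t ≤ θ ^ n * b (2 ^ n * t)
              + (1 / 2) * ∑ k ∈ Finset.range n, θ ^ k * pFav T α p (T (2 ^ k * t) x - x) := h1
          _ ≤ θ ^ n * (θ * b (2 ^ (n + 1) * t) + pFav T α p (T (2 ^ n * t) x - x) / 2)
              + (1 / 2) * ∑ k ∈ Finset.range n, θ ^ k * pFav T α p (T (2 ^ k * t) x - x) := by
              linarith
          _ = θ ^ (n + 1) * b (2 ^ (n + 1) * t)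
              + (1 / 2) * ∑ k ∈ Finset.range (n + 1),
                  θ ^ k * pFav T α p (T (2 ^ k * t) x - x) := by
              rw [Finset.sum_range_succ]
              ring
    have hbound : ∀ n : ℕ, ∀ t : ℝ, 0 < t →
        b t ≤ θ ^ n * C
          + (1 / 2) * ∑ k ∈ Finset.range n, θ ^ k * pFav T α p (T (2 ^ k * t) x - x) := by
      intro n t ht
      have h1 := hiter n t ht
      have h2 : θ ^ n * b (2 ^ n * t) ≤ θ ^ n * C :=
        mul_le_mul_of_nonneg_left (hbC _ (by positivity)) (pow_nonneg hθ0 n)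
      linarith
    rw [NormedAddCommGroup.tendsto_nhds_zero]
    intro ε hε
    obtain ⟨n, hn⟩ : ∃ n : ℕ, θ ^ n * C < ε / 2 := by
      have h1 : Filter.Tendsto (fun n : ℕ => θ ^ n * C) Filter.atTop (𝓝 0) := by
        simpa using (tendsto_pow_atTop_nhds_zero_of_lt_one hθ0 hθ1).mul_const C
      rw [NormedAddCommGroup.tendsto_nhds_zero] at h1
      obtain ⟨n, hn⟩ := (h1 (ε / 2) (by linarith)).exists
      exact ⟨n, lt_of_abs_lt (by rwa [← Real.norm_eq_abs])⟩
    set η : ℝ := ε / (2 * (n + 1)) with hη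
    have hη0 : 0 < η := by rw [hη]; positivity
    have hcomp : ∀ k : ℕ, Filter.Tendsto (fun t : ℝ => pFav T α p (T (2 ^ k * t) x - x))
        (𝓝[>] (0:ℝ)) (𝓝 0) := by
      intro k
      apply (hQ p hp).comp
      apply tendsto_nhdsWithin_of_tendsto_nhds_of_eventually_within
      · have h1 : Filter.Tendsto (fun t : ℝ => (2:ℝ) ^ k * t) (𝓝 0) (𝓝 ((2:ℝ) ^ k * 0)) :=
          ((continuous_const.mul continuous_id).tendsto 0)
        have h2 := h1.mono_left (nhdsWithin_le_nhds : 𝓝[Set.Ioi (0:ℝ)] 0 ≤ 𝓝 0)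
        simpa using h2
      · filter_upwards [self_mem_nhdsWithin] with t ht
        have : (0:ℝ) < t := ht
        have : (0:ℝ) < (2:ℝ) ^ k * t := by positivity
        exact this
    have hev : ∀ᶠ t : ℝ in 𝓝[>] 0, ∀ k ∈ Finset.range n,
        pFav T α p (T (2 ^ k * t) x - x) < η := by
      rw [Filter.eventually_all_finset]
      intro k hk
      have h1 := hcomp k
      rw [NormedAddCommGroup.tendsto_nhds_zero] at h1
      filter_upwards [h1 η hη0] with t h2
      exact lt_of_abs_lt (by rwa [← Real.norm_eq_abs])
    filter_upwards [hev, self_mem_nhdsWithin] with t h1 ht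
    have ht' : (0:ℝ) < t := ht
    have hsum : ∑ k ∈ Finset.range n, θ ^ k * pFav T α p (T (2 ^ k * t) x - x)
        ≤ (n : ℝ) * η := by
      calc ∑ k ∈ Finset.range n, θ ^ k * pFav T α p (T (2 ^ k * t) x - x)
          ≤ ∑ _k ∈ Finset.range n, η := by
            apply Finset.sum_le_sum
            intro k hk
            have hQn := hQ_nonneg p hp (2 ^ k * t)
            have hθk : θ ^ k ≤ 1 := pow_le_one₀ hθ0 hθ1.le
            calc θ ^ k * pFav T α p (T (2 ^ k * t) x - x)
                ≤ 1 * pFav T α p (T (2 ^ k * t) x - x) :=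
                  mul_le_mul_of_nonneg_right hθk hQn
              _ = pFav T α p (T (2 ^ k * t) x - x) := one_mul _
              _ ≤ η := (h1 k hk).le
        _ = (n : ℝ) * η := by simp [Finset.sum_const, nsmul_eq_mul]
    have hnη : (n : ℝ) * η ≤ ε / 2 := by
      rw [hη]
      have h2 : (n : ℝ) ≤ (n : ℝ) + 1 := by linarith
      calc (n : ℝ) * (ε / (2 * ((n : ℝ) + 1)))
          ≤ ((n : ℝ) + 1) * (ε / (2 * ((n : ℝ) + 1))) := by
            apply mul_le_mul_of_nonneg_right h2 (by positivity)
        _ = ε / 2 := by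
            field_simp
    have hb0 : 0 ≤ b t := div_nonneg (apply_nonneg p _) (hpow_pos t ht').le
    rw [Real.norm_eq_abs, abs_of_nonneg hb0]
    have hbd := hbound n t ht'
    linarith
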